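/- If f is a polynomial of degree at most 2n−1, then ∫_{-1}^1 f^{(n)}(x) φ(x) dx = 0 for a monic polynomial φ of degree n if and only if φ = 2^n(n!)²/(2n)! · P_n, where P_n is the Legendre polynomial; in particular, the corrected trapezoidal formula with the normalized Legendre polynomial has degree of exactness 2n−1. -/

import Mathlib

open Polynomial intervalIntegral

/-- The degree-`n` Legendre polynomial, via Rodrigues' formula. -/
noncomputable def legendre (n : ℕ) : Polynomial ℝ :=
  Polynomial.C (1 / (2 ^ n * (n.factorial : ℝ))) *
    Polynomial.derivative^[n] ((Polynomial.X ^ 2 - 1) ^ n)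

/- ### Auxiliary lemmas -/

private lemma intInt (p : Polynomial ℝ) :
    IntervalIntegrable (fun x => p.eval x) MeasureTheory.volume (-1 : ℝ) 1 :=
  (p.continuous_aeval).intervalIntegrable _ _

/-- FTC for polynomials. -/
private lemma integral_derivative (p : Polynomial ℝ) :
    ∫ x in (-1:ℝ)..1, (Polynomial.derivative p).eval x = p.eval 1 - p.eval (-1) := by
  apply intervalIntegral.integral_deriv_eq_sub' (fun x => p.eval x)
  · funext x; exact (p.hasDerivAt x).deriv
  · intro x _; exact (p.hasDerivAt x).differentiableAt
  · exact ((Polynomial.derivative p).continuous_aeval).continuousOn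

/-- Integration by parts for polynomials on `[-1,1]`. -/
private lemma parts (u v : Polynomial ℝ) :
    ∫ x in (-1:ℝ)..1, u.eval x * (Polynomial.derivative v).eval x
      = (u * v).eval 1 - (u * v).eval (-1)
        - ∫ x in (-1:ℝ)..1, (Polynomial.derivative u).eval x * v.eval x := by
  have h := integral_derivative (u * v)
  rw [Polynomial.derivative_mul] at h
  have h2 : ∫ x in (-1:ℝ)..1, (Polynomial.derivative u * v + u * Polynomial.derivative v).eval x
      = (∫ x in (-1:ℝ)..1, (Polynomial.derivative u).eval x * v.eval x)
        + ∫ x in (-1:ℝ)..1, u.eval x * (Polynomial.derivative v).eval x := by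
    simp only [Polynomial.eval_add, Polynomial.eval_mul]
    exact intervalIntegral.integral_add
      (((Polynomial.derivative u).continuous_aeval.mul v.continuous_aeval).intervalIntegrable _ _)
      ((u.continuous_aeval.mul (Polynomial.derivative v).continuous_aeval).intervalIntegrable _ _)
  rw [h2] at h
  linarith

/-- Iterated derivatives of `(X²-1)^n` of order `< n` vanish at `±1`. -/
private lemma boundary_zero {n k : ℕ} (hk : k < n) {x : ℝ} (hx : x = 1 ∨ x = -1) :
    (Polynomial.derivative^[k] ((Polynomial.X ^ 2 - 1 : Polynomial ℝ) ^ n)).eval x = 0 := by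
  obtain ⟨q, hq⟩ := Polynomial.pow_sub_dvd_iterate_derivative_pow
    (Polynomial.X ^ 2 - 1 : Polynomial ℝ) n k
  rw [hq, Polynomial.eval_mul, Polynomial.eval_pow]
  have hx2 : (Polynomial.X ^ 2 - 1 : Polynomial ℝ).eval x = 0 := by
    rcases hx with h | h <;> simp [h]
  rw [hx2, zero_pow (by omega), zero_mul]

/-- Orthogonality: `∫ g · ψ = 0` for `deg g < n`, where `ψ = Dⁿ (X²-1)ⁿ`. -/
private lemma orth {n : ℕ} {g : Polynomial ℝ} (hg : g.natDegree < n) :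
    ∫ x in (-1:ℝ)..1, g.eval x *
      (Polynomial.derivative^[n] ((Polynomial.X ^ 2 - 1 : Polynomial ℝ) ^ n)).eval x = 0 := by
  set w : Polynomial ℝ := (Polynomial.X ^ 2 - 1) ^ n with hw
  -- J k = ∫ (D^k g)(D^{n-k} w)
  set J : ℕ → ℝ := fun k => ∫ x in (-1:ℝ)..1,
    (Polynomial.derivative^[k] g).eval x * (Polynomial.derivative^[n-k] w).eval x with hJ
  have step : ∀ k, k < n → J k = - J (k + 1) := by
    intro k hk
    have hnk : n - k = (n - (k + 1)) + 1 := by omega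
    have : Polynomial.derivative^[n-k] w
        = Polynomial.derivative (Polynomial.derivative^[n-(k+1)] w) := by
      rw [hnk, Function.iterate_succ_apply']
    simp only [hJ, this]
    rw [parts]
    have e1 : ((Polynomial.derivative^[k] g) * (Polynomial.derivative^[n-(k+1)] w)).eval 1 = 0 := by
      rw [Polynomial.eval_mul, boundary_zero (by omega) (Or.inl rfl), mul_zero]
    have e2 : ((Polynomial.derivative^[k] g) * (Polynomial.derivative^[n-(k+1)] w)).eval (-1) = 0 := by
      rw [Polynomial.eval_mul, boundary_zero (by omega) (Or.inr rfl), mul_zero]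
    rw [e1, e2, Function.iterate_succ_apply']
    ring
  have key : ∀ k, k ≤ n → J 0 = (-1 : ℝ) ^ k * J k := by
    intro k
    induction k with
    | zero => simp
    | succ k ih =>
      intro hk
      rw [ih (by omega), step k (by omega), pow_succ]
      ring
  have hJn : J n = 0 := by
    have : Polynomial.derivative^[n] g = 0 := Polynomial.iterate_derivative_eq_zero hg
    simp [hJ, this]
  have h0 := key n le_rfl
  rw [hJn, mul_zero] at h0
  simpa [hJ] using h0

/- ### Formal antiderivative -/

noncomputable def antider (p : Polynomial ℝ) : Polynomial ℝ :=
  p.sum fun i a => Polynomial.C (a / (i + 1)) * Polynomial.X ^ (i + 1)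

private lemma derivative_antider (p : Polynomial ℝ) :
    Polynomial.derivative (antider p) = p := by
  unfold antider
  rw [Polynomial.sum, map_sum]
  have : ∀ i ∈ p.support,
      Polynomial.derivative (Polynomial.C (p.coeff i / (i + 1)) * Polynomial.X ^ (i + 1))
        = Polynomial.C (p.coeff i) * Polynomial.X ^ i := by
    intro i _
    rw [Polynomial.derivative_C_mul, Polynomial.derivative_X_pow]
    have hne : (i : ℝ) + 1 ≠ 0 := by positivity
    rw [← mul_assoc, ← Polynomial.C_mul, Nat.add_sub_cancel]
    congr 1
    push_cast
    field_simp
  rw [Finset.sum_congr rfl this]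
  exact p.sum_C_mul_X_pow_eq

private lemma natDegree_antider (p : Polynomial ℝ) :
    (antider p).natDegree ≤ p.natDegree + 1 := by
  unfold antider
  rw [Polynomial.sum]
  apply Polynomial.natDegree_sum_le_of_forall_le
  intro i hi
  calc (Polynomial.C (p.coeff i / (i + 1)) * Polynomial.X ^ (i + 1)).natDegree
      ≤ (Polynomial.C (p.coeff i / (i + 1))).natDegree + (Polynomial.X ^ (i + 1) : Polynomial ℝ).natDegree :=
        Polynomial.natDegree_mul_le
    _ ≤ i + 1 := by simp
    _ ≤ p.natDegree + 1 := by
        have := Polynomial.le_natDegree_of_mem_supp i hi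
        omega

private lemma deriv_iter_antider (k : ℕ) (g : Polynomial ℝ) :
    Polynomial.derivative^[k] (antider^[k] g) = g := by
  induction k with
  | zero => rfl
  | succ k ih =>
    rw [Function.iterate_succ_apply' antider, Function.iterate_succ_apply Polynomial.derivative,
      derivative_antider, ih]

private lemma natDegree_iter_antider (k : ℕ) (g : Polynomial ℝ) :
    (antider^[k] g).natDegree ≤ g.natDegree + k := by
  induction k with
  | zero => simp
  | succ k ih =>
    rw [Function.iterate_succ_apply']
    exact (natDegree_antider _).trans (by omega)

/- ### Vanishing square integral -/

private lemma eq_zero_of_integral_sq (p : Polynomial ℝ)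
    (h : ∫ x in (-1:ℝ)..1, (p.eval x) ^ 2 = 0) : p = 0 := by
  by_contra hp
  have hae := (intervalIntegral.integral_eq_zero_iff_of_le_of_nonneg_ae (by norm_num)
    (Filter.Eventually.of_forall fun x => sq_nonneg _)
    ((p.continuous_aeval.pow 2).intervalIntegrable _ _)).mp h
  have hnull : MeasureTheory.volume.restrict (Set.Ioc (-1:ℝ) 1)
      {x : ℝ | ¬ (p.eval x) ^ 2 = 0} = 0 := by
    have := MeasureTheory.ae_iff.mp hae
    simpa using this
  have hroots : Set.Finite {x : ℝ | Polynomial.IsRoot p x} := p.finite_setOf_isRoot hp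
  have hset : {x : ℝ | ¬ (p.eval x) ^ 2 = 0} = {x : ℝ | Polynomial.IsRoot p x}ᶜ := by
    ext x
    simp [Polynomial.IsRoot, pow_eq_zero_iff]
  rw [hset, MeasureTheory.Measure.restrict_apply hroots.measurableSet.compl] at hnull
  have h2 : MeasureTheory.volume {x : ℝ | Polynomial.IsRoot p x} = 0 := hroots.measure_zero _
  have hsub : Set.Ioc (-1:ℝ) 1 ⊆
      {x : ℝ | Polynomial.IsRoot p x} ∪ ({x : ℝ | Polynomial.IsRoot p x}ᶜ ∩ Set.Ioc (-1:ℝ) 1) := by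
    intro x hx
    by_cases hr : Polynomial.IsRoot p x
    · exact Or.inl hr
    · exact Or.inr ⟨hr, hx⟩
  have hle := (MeasureTheory.measure_mono hsub).trans (MeasureTheory.measure_union_le (μ := MeasureTheory.volume) _ _)
  rw [h2, hnull, Real.volume_Ioc] at hle
  norm_num at hle

/- ### Degree and leading coefficient of the Rodrigues polynomial -/

private lemma w_monic (n : ℕ) : ((Polynomial.X ^ 2 - 1 : Polynomial ℝ) ^ n).Monic := by
  apply Polynomial.Monic.pow
  have : (Polynomial.X ^ 2 - 1 : Polynomial ℝ) = Polynomial.X ^ 2 - Polynomial.C 1 := by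
    rw [Polynomial.C_1]
  rw [this]
  exact Polynomial.monic_X_pow_sub_C 1 two_ne_zero

private lemma w_natDegree (n : ℕ) :
    ((Polynomial.X ^ 2 - 1 : Polynomial ℝ) ^ n).natDegree = 2 * n := by
  rw [Polynomial.natDegree_pow]
  have : (Polynomial.X ^ 2 - 1 : Polynomial ℝ) = Polynomial.X ^ 2 - Polynomial.C 1 := by
    rw [Polynomial.C_1]
  rw [this, Polynomial.natDegree_X_pow_sub_C]
  ring

private lemma psi_coeff (n : ℕ) :
    (Polynomial.derivative^[n] ((Polynomial.X ^ 2 - 1 : Polynomial ℝ) ^ n)).coeff n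
      = ((2 * n).descFactorial n : ℝ) := by
  rw [Polynomial.coeff_iterate_derivative]
  have h1 : ((Polynomial.X ^ 2 - 1 : Polynomial ℝ) ^ n).coeff (n + n) = 1 := by
    have := (w_monic n).coeff_natDegree
    rwa [w_natDegree, two_mul] at this
  rw [h1, nsmul_eq_mul, mul_one, two_mul]

private lemma psi_natDegree (n : ℕ) :
    (Polynomial.derivative^[n] ((Polynomial.X ^ 2 - 1 : Polynomial ℝ) ^ n)).natDegree = n := by
  apply le_antisymm
  · have := Polynomial.natDegree_iterate_derivative
      ((Polynomial.X ^ 2 - 1 : Polynomial ℝ) ^ n) n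
    rw [w_natDegree] at this
    omega
  · apply Polynomial.le_natDegree_of_ne_zero
    rw [psi_coeff]
    have : (2 * n).descFactorial n ≠ 0 := by
      rw [Ne, Nat.descFactorial_eq_zero_iff_lt]
      omega
    exact_mod_cast this

private lemma desc_cast (n : ℕ) :
    (n.factorial : ℝ) * ((2 * n).descFactorial n : ℝ) = ((2 * n).factorial : ℝ) := by
  have := Nat.factorial_mul_descFactorial (show n ≤ 2 * n by omega)
  rw [show 2 * n - n = n by omega] at this
  exact_mod_cast this

theorem legendre_degree_of_exactness (n : ℕ) (hn : 1 ≤ n)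
    (φ : Polynomial ℝ) (hmonic : φ.Monic) (hdeg : φ.natDegree = n) :
    (∀ f : Polynomial ℝ, f.natDegree ≤ 2 * n - 1 →
        ∫ x in (-1 : ℝ)..1, (Polynomial.derivative^[n] f).eval x * φ.eval x = 0)
      ↔ φ = Polynomial.C ((2 : ℝ) ^ n * (n.factorial : ℝ) ^ 2 / ((2 * n).factorial : ℝ)) *
            legendre n := by
  set ψ : Polynomial ℝ :=
    Polynomial.derivative^[n] ((Polynomial.X ^ 2 - 1 : Polynomial ℝ) ^ n) with hψ
  set c : ℝ := (n.factorial : ℝ) / ((2 * n).factorial : ℝ) with hc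
  have hfacpos : (0:ℝ) < n.factorial := by exact_mod_cast n.factorial_pos
  have hfac2pos : (0:ℝ) < (2*n).factorial := by exact_mod_cast (2*n).factorial_pos
  have hL : Polynomial.C ((2 : ℝ) ^ n * (n.factorial : ℝ) ^ 2 / ((2 * n).factorial : ℝ)) *
      legendre n = Polynomial.C c * ψ := by
    rw [legendre, ← hψ, ← mul_assoc, ← Polynomial.C_mul]
    congr 2
    rw [hc]
    field_simp
  have hLcoeff : (Polynomial.C c * ψ).coeff n = 1 := by
    rw [Polynomial.coeff_C_mul, psi_coeff, hc]
    field_simp [desc_cast n]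
    exact desc_cast n
  have hLdeg : (Polynomial.C c * ψ).natDegree = n := by
    rw [Polynomial.natDegree_C_mul (by rw [hc]; positivity), psi_natDegree]
  have hLmonic : (Polynomial.C c * ψ).Monic := by
    rw [Polynomial.Monic, Polynomial.leadingCoeff, hLdeg, hLcoeff]
  have horthL : ∀ g : Polynomial ℝ, g.natDegree < n →
      ∫ x in (-1:ℝ)..1, g.eval x * (Polynomial.C c * ψ).eval x = 0 := by
    intro g hg
    have : ∀ x : ℝ, g.eval x * (Polynomial.C c * ψ).eval x = c * (g.eval x * ψ.eval x) := by
      intro x; rw [Polynomial.eval_mul, Polynomial.eval_C]; ring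
    simp_rw [this]
    rw [intervalIntegral.integral_const_mul, orth hg, mul_zero]
  constructor
  · intro H
    have Horth : ∀ g : Polynomial ℝ, g.natDegree < n →
        ∫ x in (-1:ℝ)..1, g.eval x * φ.eval x = 0 := by
      intro g hg
      have hf := H (antider^[n] g) ?_
      · rwa [deriv_iter_antider] at hf
      · have := natDegree_iter_antider n g
        omega
    set δ : Polynomial ℝ := φ - Polynomial.C c * ψ with hδ
    have hδdeg : δ.natDegree < n := by
      by_cases hδ0 : δ = 0
      · rw [hδ0, Polynomial.natDegree_zero]; omega
      have h1 : δ.natDegree ≤ n :=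
        (Polynomial.natDegree_sub_le _ _).trans (by rw [hdeg, hLdeg]; omega)
      rcases h1.lt_or_eq with h | h
      · exact h
      exfalso
      apply Polynomial.leadingCoeff_ne_zero.mpr hδ0
      have hφc : φ.coeff n = 1 := by rw [← hdeg]; exact hmonic.coeff_natDegree
      rw [Polynomial.leadingCoeff, h, hδ, Polynomial.coeff_sub, hφc, hLcoeff, sub_self]
    have i1 : ∫ x in (-1:ℝ)..1, δ.eval x * φ.eval x = 0 := Horth δ hδdeg
    have i2 : ∫ x in (-1:ℝ)..1, δ.eval x * (Polynomial.C c * ψ).eval x = 0 := horthL δ hδdeg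
    have isq : ∫ x in (-1:ℝ)..1, (δ.eval x) ^ 2 = 0 := by
      have hsplit : ∀ x : ℝ, (δ.eval x) ^ 2
          = δ.eval x * φ.eval x - δ.eval x * (Polynomial.C c * ψ).eval x := by
        intro x
        rw [hδ]
        simp only [Polynomial.eval_sub, Polynomial.eval_mul, Polynomial.eval_C]
        ring
      simp_rw [hsplit]
      rw [intervalIntegral.integral_sub (f := fun x => δ.eval x * φ.eval x)
        (g := fun x => δ.eval x * (Polynomial.C c * ψ).eval x)
        ((δ.continuous.mul φ.continuous).intervalIntegrable _ _)
        ((δ.continuous.mul (Polynomial.C c * ψ).continuous).intervalIntegrable _ _),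
        i1, i2, sub_zero]
    have hδ0 : δ = 0 := eq_zero_of_integral_sq δ isq
    rw [hL]
    have := sub_eq_zero.mp (hδ ▸ hδ0)
    exact this
  · intro H f hf
    rw [H, hL]
    apply horthL
    have h1 := Polynomial.natDegree_iterate_derivative f n
    omega
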